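/- For every x ∈ [911/2187, 858/2059), one has σ²(x) < σ²(c). (Here 2187 = 3^7.) -/

import Mathlib

open scoped BigOperators

/-- `V x ξ = min x ξ - x * ξ`. -/
noncomputable def V (x ξ : ℝ) : ℝ := min x ξ - x * ξ

/-- `σ²(x) = V(⟨x⟩, ⟨x⟩) + 2 ∑_{k=1}^∞ 6^{-k} V(⟨2^k x⟩, ⟨3^k x⟩)`. -/
noncomputable def sigmaSq (x : ℝ) : ℝ :=
  V (Int.fract x) (Int.fract x) +
    2 * ∑' k : ℕ, (1 / 6 ^ (k + 1) : ℝ) *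
      V (Int.fract ((2 : ℝ) ^ (k + 1) * x)) (Int.fract ((3 : ℝ) ^ (k + 1) * x))

/-- `c = 277/665 = 277/(3^6 - 2^6)`. -/
noncomputable def c : ℝ := 277 / 665

lemma fract_eq' (x : ℝ) (n : ℤ) (h1 : (n:ℝ) ≤ x) (h2 : x < n+1) : Int.fract x = x - n := by
  rw [Int.fract, Int.floor_eq_iff.mpr ⟨h1, h2⟩]

lemma V_fract_nonneg (a b : ℝ) : 0 ≤ V (Int.fract a) (Int.fract b) := by
  unfold V
  rcases le_total (Int.fract a) (Int.fract b) with h | h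
  · rw [min_eq_left h]
    nlinarith [Int.fract_nonneg a, Int.fract_lt_one b]
  · rw [min_eq_right h]
    nlinarith [Int.fract_nonneg b, Int.fract_lt_one a]

lemma V_fract_le_quarter (a b : ℝ) : V (Int.fract a) (Int.fract b) ≤ 1/4 := by
  unfold V
  rcases le_total (Int.fract a) (Int.fract b) with h | h
  · rw [min_eq_left h]
    nlinarith [Int.fract_nonneg a, Int.fract_nonneg b, sq_nonneg (Int.fract a - 1/2)]
  · rw [min_eq_right h]
    nlinarith [Int.fract_nonneg a, Int.fract_nonneg b, sq_nonneg (Int.fract b - 1/2)]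

lemma V_le_fst (a b : ℝ) (h0 : 0 ≤ a) (h1 : a ≤ 1) (h2 : 0 ≤ b) : V a b ≤ a - a*a := by
  unfold V
  rcases le_total a b with h | h
  · rw [min_eq_left h]; nlinarith
  · rw [min_eq_right h]; nlinarith

lemma summable_bnd : Summable (fun k : ℕ => (1/4 : ℝ) * (1/6) ^ (k+1)) := by
  apply Summable.mul_left
  exact (summable_geometric_of_lt_one (by norm_num) (by norm_num)).comp_injective (add_left_injective 1)

lemma summable_sig (x : ℝ) : Summable (fun k : ℕ => (1 / 6 ^ (k + 1) : ℝ) *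
      V (Int.fract ((2 : ℝ) ^ (k + 1) * x)) (Int.fract ((3 : ℝ) ^ (k + 1) * x))) := by
  apply Summable.of_nonneg_of_le (fun k => ?_) (fun k => ?_) summable_bnd
  · exact mul_nonneg (by positivity) (V_fract_nonneg _ _)
  · have h := V_fract_le_quarter ((2 : ℝ) ^ (k + 1) * x) ((3 : ℝ) ^ (k + 1) * x)
    rw [div_pow, one_pow]
    rw [mul_comm (1/4 : ℝ)]
    calc (1 / 6 ^ (k + 1) : ℝ) * V _ _ ≤ (1 / 6 ^ (k + 1) : ℝ) * (1/4) :=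
          mul_le_mul_of_nonneg_left h (by positivity)
      _ = 1 / 6 ^ (k+1) * (1/4) := rfl

lemma sigmaSq_split (x : ℝ) :
    sigmaSq x = V (Int.fract x) (Int.fract x)
      + 2 * (∑ k ∈ Finset.range 12, (1/6^(k+1):ℝ) *
          V (Int.fract ((2:ℝ)^(k+1)*x)) (Int.fract ((3:ℝ)^(k+1)*x)))
      + 2 * (∑' k : ℕ, (1/6^(k+13):ℝ) *
          V (Int.fract ((2:ℝ)^(k+13)*x)) (Int.fract ((3:ℝ)^(k+13)*x))) := by
  unfold sigmaSq
  rw [← Summable.sum_add_tsum_nat_add 12 (summable_sig x)]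
  have h : ∀ k : ℕ, k + 12 + 1 = k + 13 := fun k => by omega
  simp only [h]
  ring

lemma tail_nonneg (x : ℝ) : 0 ≤ ∑' k : ℕ, (1/6^(k+13):ℝ) *
    V (Int.fract ((2:ℝ)^(k+13)*x)) (Int.fract ((3:ℝ)^(k+13)*x)) := by
  apply tsum_nonneg
  intro k
  exact mul_nonneg (by positivity) (V_fract_nonneg _ _)

lemma summable_tail (x : ℝ) : Summable (fun k : ℕ => (1/6^(k+13):ℝ) *
    V (Int.fract ((2:ℝ)^(k+13)*x)) (Int.fract ((3:ℝ)^(k+13)*x))) := by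
  have h := (summable_nat_add_iff 12).mpr (summable_sig x)
  have he : ∀ k : ℕ, k + 12 + 1 = k + 13 := fun k => by omega
  simpa only [he] using h

lemma tail_le (x : ℝ) : ∑' k : ℕ, (1/6^(k+13):ℝ) *
    V (Int.fract ((2:ℝ)^(k+13)*x)) (Int.fract ((3:ℝ)^(k+13)*x)) ≤ 1/43535646720 := by
  have hgeo : Summable (fun k : ℕ => ((1/6:ℝ))^k) :=
    summable_geometric_of_lt_one (by norm_num) (by norm_num)
  have hb : Summable (fun k : ℕ => ((1/4:ℝ) * (1/6)^13) * (1/6)^k) := hgeo.mul_left _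
  have hle : ∀ k : ℕ, (1/6^(k+13):ℝ) *
      V (Int.fract ((2:ℝ)^(k+13)*x)) (Int.fract ((3:ℝ)^(k+13)*x)) ≤ ((1/4:ℝ) * (1/6)^13) * (1/6)^k := by
    intro k
    have h := V_fract_le_quarter ((2:ℝ)^(k+13)*x) ((3:ℝ)^(k+13)*x)
    have : ((1/4:ℝ) * (1/6)^13) * (1/6)^k = (1/6^(k+13):ℝ) * (1/4) := by
      rw [div_pow, div_pow, one_pow, one_pow, pow_add]
      field_simp
    rw [this]
    exact mul_le_mul_of_nonneg_left h (by positivity)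
  calc ∑' k : ℕ, (1/6^(k+13):ℝ) * V (Int.fract ((2:ℝ)^(k+13)*x)) (Int.fract ((3:ℝ)^(k+13)*x))
      ≤ ∑' k : ℕ, ((1/4:ℝ) * (1/6)^13) * (1/6)^k := Summable.tsum_le_tsum hle (summable_tail x) hb
    _ = ((1/4:ℝ) * (1/6)^13) * ∑' k : ℕ, ((1/6:ℝ))^k := tsum_mul_left
    _ = ((1/4:ℝ) * (1/6)^13) * (1 - 1/6)⁻¹ := by rw [tsum_geometric_of_lt_one (by norm_num) (by norm_num)]
    _ = 1/43535646720 := by norm_num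

lemma sigmaSq_c_ge : (1433548387583/5347930936320 : ℝ) ≤ sigmaSq c := by
  rw [sigmaSq_split c]
  have e0 : Int.fract c = 277/665 := by
    unfold c; rw [fract_eq' _ 0 (by norm_num) (by norm_num)]; norm_num
  have e2_1 : Int.fract ((2:ℝ)*c) = 554/665 := by
    have hv : ((2:ℝ)*c) = 554/665 := by unfold c; norm_num
    rw [hv, fract_eq' _ 0 (by norm_num) (by norm_num)]; norm_num
  have e3_1 : Int.fract ((3:ℝ)*c) = 166/665 := by
    have hv : ((3:ℝ)*c) = 831/665 := by unfold c; norm_num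
    rw [hv, fract_eq' _ 1 (by norm_num) (by norm_num)]; norm_num
  have e2_2 : Int.fract ((4:ℝ)*c) = 443/665 := by
    have hv : ((4:ℝ)*c) = 1108/665 := by unfold c; norm_num
    rw [hv, fract_eq' _ 1 (by norm_num) (by norm_num)]; norm_num
  have e3_2 : Int.fract ((9:ℝ)*c) = 498/665 := by
    have hv : ((9:ℝ)*c) = 2493/665 := by unfold c; norm_num
    rw [hv, fract_eq' _ 3 (by norm_num) (by norm_num)]; norm_num
  have e2_3 : Int.fract ((8:ℝ)*c) = 221/665 := by
    have hv : ((8:ℝ)*c) = 2216/665 := by unfold c; norm_num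
    rw [hv, fract_eq' _ 3 (by norm_num) (by norm_num)]; norm_num
  have e3_3 : Int.fract ((27:ℝ)*c) = 164/665 := by
    have hv : ((27:ℝ)*c) = 7479/665 := by unfold c; norm_num
    rw [hv, fract_eq' _ 11 (by norm_num) (by norm_num)]; norm_num
  have e2_4 : Int.fract ((16:ℝ)*c) = 442/665 := by
    have hv : ((16:ℝ)*c) = 4432/665 := by unfold c; norm_num
    rw [hv, fract_eq' _ 6 (by norm_num) (by norm_num)]; norm_num
  have e3_4 : Int.fract ((81:ℝ)*c) = 492/665 := by
    have hv : ((81:ℝ)*c) = 22437/665 := by unfold c; norm_num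
    rw [hv, fract_eq' _ 33 (by norm_num) (by norm_num)]; norm_num
  have e2_5 : Int.fract ((32:ℝ)*c) = 219/665 := by
    have hv : ((32:ℝ)*c) = 8864/665 := by unfold c; norm_num
    rw [hv, fract_eq' _ 13 (by norm_num) (by norm_num)]; norm_num
  have e3_5 : Int.fract ((243:ℝ)*c) = 146/665 := by
    have hv : ((243:ℝ)*c) = 67311/665 := by unfold c; norm_num
    rw [hv, fract_eq' _ 101 (by norm_num) (by norm_num)]; norm_num
  have e2_6 : Int.fract ((64:ℝ)*c) = 438/665 := by
    have hv : ((64:ℝ)*c) = 17728/665 := by unfold c; norm_num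
    rw [hv, fract_eq' _ 26 (by norm_num) (by norm_num)]; norm_num
  have e3_6 : Int.fract ((729:ℝ)*c) = 438/665 := by
    have hv : ((729:ℝ)*c) = 201933/665 := by unfold c; norm_num
    rw [hv, fract_eq' _ 303 (by norm_num) (by norm_num)]; norm_num
  have e2_7 : Int.fract ((128:ℝ)*c) = 211/665 := by
    have hv : ((128:ℝ)*c) = 35456/665 := by unfold c; norm_num
    rw [hv, fract_eq' _ 53 (by norm_num) (by norm_num)]; norm_num
  have e3_7 : Int.fract ((2187:ℝ)*c) = 649/665 := by
    have hv : ((2187:ℝ)*c) = 605799/665 := by unfold c; norm_num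
    rw [hv, fract_eq' _ 910 (by norm_num) (by norm_num)]; norm_num
  have e2_8 : Int.fract ((256:ℝ)*c) = 422/665 := by
    have hv : ((256:ℝ)*c) = 70912/665 := by unfold c; norm_num
    rw [hv, fract_eq' _ 106 (by norm_num) (by norm_num)]; norm_num
  have e3_8 : Int.fract ((6561:ℝ)*c) = 617/665 := by
    have hv : ((6561:ℝ)*c) = 1817397/665 := by unfold c; norm_num
    rw [hv, fract_eq' _ 2732 (by norm_num) (by norm_num)]; norm_num
  have e2_9 : Int.fract ((512:ℝ)*c) = 179/665 := by
    have hv : ((512:ℝ)*c) = 141824/665 := by unfold c; norm_num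
    rw [hv, fract_eq' _ 213 (by norm_num) (by norm_num)]; norm_num
  have e3_9 : Int.fract ((19683:ℝ)*c) = 521/665 := by
    have hv : ((19683:ℝ)*c) = 5452191/665 := by unfold c; norm_num
    rw [hv, fract_eq' _ 8198 (by norm_num) (by norm_num)]; norm_num
  have e2_10 : Int.fract ((1024:ℝ)*c) = 358/665 := by
    have hv : ((1024:ℝ)*c) = 283648/665 := by unfold c; norm_num
    rw [hv, fract_eq' _ 426 (by norm_num) (by norm_num)]; norm_num
  have e3_10 : Int.fract ((59049:ℝ)*c) = 233/665 := by
    have hv : ((59049:ℝ)*c) = 16356573/665 := by unfold c; norm_num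
    rw [hv, fract_eq' _ 24596 (by norm_num) (by norm_num)]; norm_num
  have e2_11 : Int.fract ((2048:ℝ)*c) = 51/665 := by
    have hv : ((2048:ℝ)*c) = 567296/665 := by unfold c; norm_num
    rw [hv, fract_eq' _ 853 (by norm_num) (by norm_num)]; norm_num
  have e3_11 : Int.fract ((177147:ℝ)*c) = 34/665 := by
    have hv : ((177147:ℝ)*c) = 49069719/665 := by unfold c; norm_num
    rw [hv, fract_eq' _ 73789 (by norm_num) (by norm_num)]; norm_num
  have e2_12 : Int.fract ((4096:ℝ)*c) = 102/665 := by
    have hv : ((4096:ℝ)*c) = 1134592/665 := by unfold c; norm_num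
    rw [hv, fract_eq' _ 1706 (by norm_num) (by norm_num)]; norm_num
  have e3_12 : Int.fract ((531441:ℝ)*c) = 102/665 := by
    have hv : ((531441:ℝ)*c) = 147209157/665 := by unfold c; norm_num
    rw [hv, fract_eq' _ 221367 (by norm_num) (by norm_num)]; norm_num
  rw [Finset.sum_range_succ, Finset.sum_range_succ, Finset.sum_range_succ, Finset.sum_range_succ,
      Finset.sum_range_succ, Finset.sum_range_succ, Finset.sum_range_succ, Finset.sum_range_succ,
      Finset.sum_range_succ, Finset.sum_range_succ, Finset.sum_range_succ, Finset.sum_range_succ,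
      Finset.sum_range_zero]
  norm_num [e0, e2_1, e3_1, e2_2, e3_2, e2_3, e3_3, e2_4, e3_4, e2_5, e3_5, e2_6, e3_6, e2_7, e3_7, e2_8, e3_8, e2_9, e3_9, e2_10, e3_10, e2_11, e3_11, e2_12, e3_12, V, min_def]
  have ht := tail_nonneg c
  norm_num [V, min_def] at ht
  linarith

set_option maxHeartbeats 4000000 in
theorem sigmaSq_lt_on_interval_16 (x : ℝ) (hx : x ∈ Set.Ico (911/2187 : ℝ) (858/2059)) :
    sigmaSq x < sigmaSq c := by
  obtain ⟨hl, hu⟩ := hx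
  have hqc := sigmaSq_c_ge
  have hmain : sigmaSq x < (1433548387583/5347930936320 : ℝ) := by
    rcases lt_or_ge x (2734/6561 : ℝ) with hcase | hcase
    · -- lo = 911/2187, hi = 2734/6561
      have f0 : Int.fract x = x := Int.fract_eq_self.mpr ⟨by linarith, by linarith⟩
      have f2_1 : Int.fract ((2:ℝ)*x) = 2*x := Int.fract_eq_self.mpr ⟨by linarith, by linarith⟩
      have f3_1 : Int.fract ((3:ℝ)*x) = 3*x - 1 := by
        rw [fract_eq' _ 1 (by push_cast; linarith) (by push_cast; linarith)]; norm_num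
      have f2_2 : Int.fract ((4:ℝ)*x) = 4*x - 1 := by
        rw [fract_eq' _ 1 (by push_cast; linarith) (by push_cast; linarith)]; norm_num
      have f3_2 : Int.fract ((9:ℝ)*x) = 9*x - 3 := by
        rw [fract_eq' _ 3 (by push_cast; linarith) (by push_cast; linarith)]; norm_num
      have f2_3 : Int.fract ((8:ℝ)*x) = 8*x - 3 := by
        rw [fract_eq' _ 3 (by push_cast; linarith) (by push_cast; linarith)]; norm_num
      have f3_3 : Int.fract ((27:ℝ)*x) = 27*x - 11 := by
        rw [fract_eq' _ 11 (by push_cast; linarith) (by push_cast; linarith)]; norm_num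
      have f2_4 : Int.fract ((16:ℝ)*x) = 16*x - 6 := by
        rw [fract_eq' _ 6 (by push_cast; linarith) (by push_cast; linarith)]; norm_num
      have f3_4 : Int.fract ((81:ℝ)*x) = 81*x - 33 := by
        rw [fract_eq' _ 33 (by push_cast; linarith) (by push_cast; linarith)]; norm_num
      have f2_5 : Int.fract ((32:ℝ)*x) = 32*x - 13 := by
        rw [fract_eq' _ 13 (by push_cast; linarith) (by push_cast; linarith)]; norm_num
      have f3_5 : Int.fract ((243:ℝ)*x) = 243*x - 101 := by
        rw [fract_eq' _ 101 (by push_cast; linarith) (by push_cast; linarith)]; norm_num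
      have f2_6 : Int.fract ((64:ℝ)*x) = 64*x - 26 := by
        rw [fract_eq' _ 26 (by push_cast; linarith) (by push_cast; linarith)]; norm_num
      have f3_6 : Int.fract ((729:ℝ)*x) = 729*x - 303 := by
        rw [fract_eq' _ 303 (by push_cast; linarith) (by push_cast; linarith)]; norm_num
      have f2_7 : Int.fract ((128:ℝ)*x) = 128*x - 53 := by
        rw [fract_eq' _ 53 (by push_cast; linarith) (by push_cast; linarith)]; norm_num
      have f3_7 : Int.fract ((2187:ℝ)*x) = 2187*x - 911 := by
        rw [fract_eq' _ 911 (by push_cast; linarith) (by push_cast; linarith)]; norm_num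
      have f2_8 : Int.fract ((256:ℝ)*x) = 256*x - 106 := by
        rw [fract_eq' _ 106 (by push_cast; linarith) (by push_cast; linarith)]; norm_num
      have f3_8 : Int.fract ((6561:ℝ)*x) = 6561*x - 2733 := by
        rw [fract_eq' _ 2733 (by push_cast; linarith) (by push_cast; linarith)]; norm_num
      have f2_9 : Int.fract ((512:ℝ)*x) = 512*x - 213 := by
        rw [fract_eq' _ 213 (by push_cast; linarith) (by push_cast; linarith)]; norm_num
      have f2_10 : Int.fract ((1024:ℝ)*x) = 1024*x - 426 := by
        rw [fract_eq' _ 426 (by push_cast; linarith) (by push_cast; linarith)]; norm_num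
      have f2_11 : Int.fract ((2048:ℝ)*x) = 2048*x - 853 := by
        rw [fract_eq' _ 853 (by push_cast; linarith) (by push_cast; linarith)]; norm_num
      have f2_12 : Int.fract ((4096:ℝ)*x) = 4096*x - 1706 := by
        rw [fract_eq' _ 1706 (by push_cast; linarith) (by push_cast; linarith)]; norm_num
      have hV0 : V x x ≤ (829921/4782969 : ℝ) + (365/2187 : ℝ)*x := by
        unfold V; rw [min_self]; linarith [sq_nonneg (x - (911/2187 : ℝ))]
      have hV1 : V (2*x) (3*x - 1) ≤ (65519/1594323 : ℝ) + (1/729 : ℝ)*x := by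
        have hm := min_le_right (2*x) (3*x - 1)
        unfold V
        linarith [hm, sq_nonneg (x - (911/2187 : ℝ))]
      have hV2 : V (4*x - 1) (9*x - 3) ≤ (1193920/531441 : ℝ) + (-1213/243 : ℝ)*x := by
        have hm := min_le_left (4*x - 1) (9*x - 3)
        unfold V
        linarith [hm, sq_nonneg (x - (911/2187 : ℝ))]
      have hV3 : V (8*x - 3) (27*x - 11) ≤ (-1155100/177147 : ℝ) + (1300/81 : ℝ)*x := by
        have hm := min_le_right (8*x - 3) (27*x - 11)
        unfold V
        linarith [hm, sq_nonneg (x - (911/2187 : ℝ))]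
      have hV4 : V (16*x - 6) (81*x - 33) ≤ (1232740/59049 : ℝ) + (-1342/27 : ℝ)*x := by
        have hm := min_le_left (16*x - 6) (81*x - 33)
        unfold V
        linarith [hm, sq_nonneg (x - (911/2187 : ℝ))]
      have hV5 : V (32*x - 13) (243*x - 101) ≤ (-1274290/19683 : ℝ) + (1402/9 : ℝ)*x := by
        have hm := min_le_right (32*x - 13) (243*x - 101)
        unfold V
        linarith [hm, sq_nonneg (x - (911/2187 : ℝ))]
      have hV6 : V (64*x - 26) (729*x - 303) ≤ (1256800/6561 : ℝ) + (-1378/3 : ℝ)*x := by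
        have hm := min_le_left (64*x - 26) (729*x - 303)
        unfold V
        linarith [hm, sq_nonneg (x - (911/2187 : ℝ))]
      have hV7 : V (128*x - 53) (2187*x - 911) ≤ (-1357390/2187 : ℝ) + (1490 : ℝ)*x := by
        have hm := min_le_right (128*x - 53) (2187*x - 911)
        unfold V
        linarith [hm, sq_nonneg (x - (911/2187 : ℝ))]
      have hV8 : V (256*x - 106) (6561*x - 2733) ≤ (-722423/729 : ℝ) + (2379 : ℝ)*x := by
        have hm := min_le_right (256*x - 106) (6561*x - 2733)
        unfold V
        linarith [hm, sq_nonneg (x - (911/2187 : ℝ))]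
      have hV9 : V (512*x - 213) (Int.fract ((19683:ℝ)*x)) ≤ (-458482334/4782969 : ℝ) + (504320/2187 : ℝ)*x := by
        have h := V_le_fst (Int.fract ((512:ℝ)*x)) (Int.fract ((19683:ℝ)*x)) (Int.fract_nonneg _) (le_of_lt (Int.fract_lt_one _)) (Int.fract_nonneg _)
        rw [f2_9] at h
        linarith [h, sq_nonneg (x - (911/2187 : ℝ))]
      have hV10 : V (1024*x - 426) (Int.fract ((59049:ℝ)*x)) ≤ (203615458/4782969 : ℝ) + (-222208/2187 : ℝ)*x := by
        have h := V_le_fst (Int.fract ((1024:ℝ)*x)) (Int.fract ((59049:ℝ)*x)) (Int.fract_nonneg _) (le_of_lt (Int.fract_lt_one _)) (Int.fract_nonneg _)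
        rw [f2_10] at h
        linarith [h, sq_nonneg (x - (911/2187 : ℝ))]
      have hV11 : V (2048*x - 853) (Int.fract ((177147:ℝ)*x)) ≤ (-3270193694/4782969 : ℝ) + (3590144/2187 : ℝ)*x := by
        have h := V_le_fst (Int.fract ((2048:ℝ)*x)) (Int.fract ((177147:ℝ)*x)) (Int.fract_nonneg _) (le_of_lt (Int.fract_lt_one _)) (Int.fract_nonneg _)
        rw [f2_11] at h
        linarith [h, sq_nonneg (x - (911/2187 : ℝ))]
      have hV12 : V (4096*x - 1706) (Int.fract ((531441:ℝ)*x)) ≤ (-4921029662/4782969 : ℝ) + (5402624/2187 : ℝ)*x := by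
        have h := V_le_fst (Int.fract ((4096:ℝ)*x)) (Int.fract ((531441:ℝ)*x)) (Int.fract_nonneg _) (le_of_lt (Int.fract_lt_one _)) (Int.fract_nonneg _)
        rw [f2_12] at h
        linarith [h, sq_nonneg (x - (911/2187 : ℝ))]
      rw [sigmaSq_split x]
      rw [Finset.sum_range_succ, Finset.sum_range_succ, Finset.sum_range_succ, Finset.sum_range_succ,
          Finset.sum_range_succ, Finset.sum_range_succ, Finset.sum_range_succ, Finset.sum_range_succ,
          Finset.sum_range_succ, Finset.sum_range_succ, Finset.sum_range_succ, Finset.sum_range_succ,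
          Finset.sum_range_zero]
      have htail := tail_le x
      simp only [one_div] at htail
      norm_num [f0, f2_1, f3_1, f2_2, f3_2, f2_3, f3_3, f2_4, f3_4, f2_5, f3_5, f2_6, f3_6, f2_7, f3_7, f2_8, f3_8, f2_9, f2_10, f2_11, f2_12]
      linarith [hV0, hV1, hV2, hV3, hV4, hV5, hV6, hV7, hV8, hV9, hV10, hV11, hV12, htail]
    · -- lo = 2734/6561, hi = 858/2059
      have f0 : Int.fract x = x := Int.fract_eq_self.mpr ⟨by linarith, by linarith⟩
      have f2_1 : Int.fract ((2:ℝ)*x) = 2*x := Int.fract_eq_self.mpr ⟨by linarith, by linarith⟩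
      have f3_1 : Int.fract ((3:ℝ)*x) = 3*x - 1 := by
        rw [fract_eq' _ 1 (by push_cast; linarith) (by push_cast; linarith)]; norm_num
      have f2_2 : Int.fract ((4:ℝ)*x) = 4*x - 1 := by
        rw [fract_eq' _ 1 (by push_cast; linarith) (by push_cast; linarith)]; norm_num
      have f3_2 : Int.fract ((9:ℝ)*x) = 9*x - 3 := by
        rw [fract_eq' _ 3 (by push_cast; linarith) (by push_cast; linarith)]; norm_num
      have f2_3 : Int.fract ((8:ℝ)*x) = 8*x - 3 := by
        rw [fract_eq' _ 3 (by push_cast; linarith) (by push_cast; linarith)]; norm_num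
      have f3_3 : Int.fract ((27:ℝ)*x) = 27*x - 11 := by
        rw [fract_eq' _ 11 (by push_cast; linarith) (by push_cast; linarith)]; norm_num
      have f2_4 : Int.fract ((16:ℝ)*x) = 16*x - 6 := by
        rw [fract_eq' _ 6 (by push_cast; linarith) (by push_cast; linarith)]; norm_num
      have f3_4 : Int.fract ((81:ℝ)*x) = 81*x - 33 := by
        rw [fract_eq' _ 33 (by push_cast; linarith) (by push_cast; linarith)]; norm_num
      have f2_5 : Int.fract ((32:ℝ)*x) = 32*x - 13 := by
        rw [fract_eq' _ 13 (by push_cast; linarith) (by push_cast; linarith)]; norm_num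
      have f3_5 : Int.fract ((243:ℝ)*x) = 243*x - 101 := by
        rw [fract_eq' _ 101 (by push_cast; linarith) (by push_cast; linarith)]; norm_num
      have f2_6 : Int.fract ((64:ℝ)*x) = 64*x - 26 := by
        rw [fract_eq' _ 26 (by push_cast; linarith) (by push_cast; linarith)]; norm_num
      have f3_6 : Int.fract ((729:ℝ)*x) = 729*x - 303 := by
        rw [fract_eq' _ 303 (by push_cast; linarith) (by push_cast; linarith)]; norm_num
      have f2_7 : Int.fract ((128:ℝ)*x) = 128*x - 53 := by
        rw [fract_eq' _ 53 (by push_cast; linarith) (by push_cast; linarith)]; norm_num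
      have f3_7 : Int.fract ((2187:ℝ)*x) = 2187*x - 911 := by
        rw [fract_eq' _ 911 (by push_cast; linarith) (by push_cast; linarith)]; norm_num
      have f2_8 : Int.fract ((256:ℝ)*x) = 256*x - 106 := by
        rw [fract_eq' _ 106 (by push_cast; linarith) (by push_cast; linarith)]; norm_num
      have f3_8 : Int.fract ((6561:ℝ)*x) = 6561*x - 2734 := by
        rw [fract_eq' _ 2734 (by push_cast; linarith) (by push_cast; linarith)]; norm_num
      have f2_9 : Int.fract ((512:ℝ)*x) = 512*x - 213 := by
        rw [fract_eq' _ 213 (by push_cast; linarith) (by push_cast; linarith)]; norm_num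
      have f2_10 : Int.fract ((1024:ℝ)*x) = 1024*x - 426 := by
        rw [fract_eq' _ 426 (by push_cast; linarith) (by push_cast; linarith)]; norm_num
      have f2_11 : Int.fract ((2048:ℝ)*x) = 2048*x - 853 := by
        rw [fract_eq' _ 853 (by push_cast; linarith) (by push_cast; linarith)]; norm_num
      have f2_12 : Int.fract ((4096:ℝ)*x) = 4096*x - 1706 := by
        rw [fract_eq' _ 1706 (by push_cast; linarith) (by push_cast; linarith)]; norm_num
      have hV0 : V x x ≤ (7474756/43046721 : ℝ) + (1093/6561 : ℝ)*x := by
        unfold V; rw [min_self]; linarith [sq_nonneg (x - (2734/6561 : ℝ))]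
      have hV1 : V (2*x) (3*x - 1) ≤ (600605/14348907 : ℝ) + (-1/2187 : ℝ)*x := by
        have hm := min_le_right (2*x) (3*x - 1)
        unfold V
        linarith [hm, sq_nonneg (x - (2734/6561 : ℝ))]
      have hV2 : V (4*x - 1) (9*x - 3) ≤ (10767148/4782969 : ℝ) + (-3647/729 : ℝ)*x := by
        have hm := min_le_left (4*x - 1) (9*x - 3)
        unfold V
        linarith [hm, sq_nonneg (x - (2734/6561 : ℝ))]
      have hV3 : V (8*x - 3) (27*x - 11) ≤ (-10352164/1594323 : ℝ) + (3884/243 : ℝ)*x := by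
        have hm := min_le_right (8*x - 3) (27*x - 11)
        unfold V
        linarith [hm, sq_nonneg (x - (2734/6561 : ℝ))]
      have hV4 : V (16*x - 6) (81*x - 33) ≤ (11182132/531441 : ℝ) + (-4058/81 : ℝ)*x := by
        have hm := min_le_left (16*x - 6) (81*x - 33)
        unfold V
        linarith [hm, sq_nonneg (x - (2734/6561 : ℝ))]
      have hV5 : V (32*x - 13) (243*x - 101) ≤ (-11293666/177147 : ℝ) + (4142/27 : ℝ)*x := by
        have hm := min_le_right (32*x - 13) (243*x - 101)
        unfold V
        linarith [hm, sq_nonneg (x - (2734/6561 : ℝ))]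
      have hV6 : V (64*x - 26) (729*x - 303) ≤ (11661088/59049 : ℝ) + (-4262/9 : ℝ)*x := by
        have hm := min_le_left (64*x - 26) (729*x - 303)
        unfold V
        linarith [hm, sq_nonneg (x - (2734/6561 : ℝ))]
      have hV7 : V (128*x - 53) (2187*x - 911) ≤ (-11516734/19683 : ℝ) + (4214/3 : ℝ)*x := by
        have hm := min_le_right (128*x - 53) (2187*x - 911)
        unfold V
        linarith [hm, sq_nonneg (x - (2734/6561 : ℝ))]
      have hV8 : V (256*x - 106) (6561*x - 2734) ≤ (-5804282/6561 : ℝ) + (2123 : ℝ)*x := by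
        have hm := min_le_right (256*x - 106) (6561*x - 2734)
        unfold V
        linarith [hm, sq_nonneg (x - (2734/6561 : ℝ))]
      have hV9 : V (512*x - 213) (Int.fract ((19683:ℝ)*x)) ≤ (-2693199758/43046721 : ℝ) + (988672/6561 : ℝ)*x := by
        have h := V_le_fst (Int.fract ((512:ℝ)*x)) (Int.fract ((19683:ℝ)*x)) (Int.fract_nonneg _) (le_of_lt (Int.fract_lt_one _)) (Int.fract_nonneg _)
        rw [f2_9] at h
        linarith [h, sq_nonneg (x - (2734/6561 : ℝ))]
      have hV10 : V (1024*x - 426) (Int.fract ((59049:ℝ)*x)) ≤ (7565104114/43046721 : ℝ) + (-2763776/6561 : ℝ)*x := by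
        have h := V_le_fst (Int.fract ((1024:ℝ)*x)) (Int.fract ((59049:ℝ)*x)) (Int.fract_nonneg _) (le_of_lt (Int.fract_lt_one _)) (Int.fract_nonneg _)
        rw [f2_10] at h
        linarith [h, sq_nonneg (x - (2734/6561 : ℝ))]
      have hV11 : V (2048*x - 853) (Int.fract ((177147:ℝ)*x)) ≤ (-6501483278/43046721 : ℝ) + (2381824/6561 : ℝ)*x := by
        have h := V_le_fst (Int.fract ((2048:ℝ)*x)) (Int.fract ((177147:ℝ)*x)) (Int.fract_nonneg _) (le_of_lt (Int.fract_lt_one _)) (Int.fract_nonneg _)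
        rw [f2_11] at h
        linarith [h, sq_nonneg (x - (2734/6561 : ℝ))]
      have hV12 : V (4096*x - 1706) (Int.fract ((531441:ℝ)*x)) ≤ (47431772914/43046721 : ℝ) + (-17346560/6561 : ℝ)*x := by
        have h := V_le_fst (Int.fract ((4096:ℝ)*x)) (Int.fract ((531441:ℝ)*x)) (Int.fract_nonneg _) (le_of_lt (Int.fract_lt_one _)) (Int.fract_nonneg _)
        rw [f2_12] at h
        linarith [h, sq_nonneg (x - (2734/6561 : ℝ))]
      rw [sigmaSq_split x]
      rw [Finset.sum_range_succ, Finset.sum_range_succ, Finset.sum_range_succ, Finset.sum_range_succ,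
          Finset.sum_range_succ, Finset.sum_range_succ, Finset.sum_range_succ, Finset.sum_range_succ,
          Finset.sum_range_succ, Finset.sum_range_succ, Finset.sum_range_succ, Finset.sum_range_succ,
          Finset.sum_range_zero]
      have htail := tail_le x
      simp only [one_div] at htail
      norm_num [f0, f2_1, f3_1, f2_2, f3_2, f2_3, f3_3, f2_4, f3_4, f2_5, f3_5, f2_6, f3_6, f2_7, f3_7, f2_8, f3_8, f2_9, f2_10, f2_11, f2_12]
      linarith [hV0, hV1, hV2, hV3, hV4, hV5, hV6, hV7, hV8, hV9, hV10, hV11, hV12, htail]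
  linarith
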